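/- Let k be a field of characteristic 0, n ≥ 1, and f_n = FreeLieAlgebra k (Fin n) with generators x_1, …, x_n. For indices a ≠ b in {0, 1, …, n}, let D_{ab} = D_{ba} be Lie algebra derivations of f_n with the following values on generators: for 1 ≤ i ≤ n, D_{0i}(x_j) = ⁅x_i, x_j⁆ for all j; and for 1 ≤ i < j ≤ n, D_{ij}(x_i) = ⁅x_i, x_j⁆, D_{ij}(x_j) = ⁅x_j, x_i⁆, and D_{ij}(x_k) = 0 for k ≠ i, j. Then these derivations satisfy the infinitesimal braid relations: ⁅D_{ab}, D_{ac} + D_{bc}⁆ = 0 for all distinct a, b, c ∈ {0, …, n}, and ⁅D_{ab}, D_{cd}⁆ = 0 for all distinct a, b, c, d ∈ {0, …, n} (brackets of derivations being commutators). In particular the assignment t_{ab} ↦ D_{ab} defines a Lie algebra morphism ad : t_{n+1} → Der(f_n) landing in the tangential derivations. -/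

import Mathlib

/-!
The Lie algebra `t_N` of infinitesimal braids over a field `k` of characteristic 0:
quotient of the free Lie algebra on generators `T (i,j)` (for `i ≠ j` in `Fin N`)
by the Lie ideal generated by the symmetry relations `T (i,j) - T (j,i)`, the
relations `⁅T (i,j), T (i,l) + T (j,l)⁆` for distinct `i, j, l` and
`⁅T (i,j), T (l,m)⁆` for distinct `i, j, k, l`.
-/

/-- Index type for the generators `T_{ij}` of `t_N`. -/
abbrev tGenIdx (N : ℕ) := {p : Fin N × Fin N // p.1 ≠ p.2}

/-- The free generator `T_{ij}`. -/
noncomputable def Tgen (k : Type) [Field k] [CharZero k] {N : ℕ} (i j : Fin N) (h : i ≠ j) :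
    FreeLieAlgebra k (tGenIdx N) :=
  FreeLieAlgebra.of k ⟨(i, j), h⟩

/-- The defining relations of the infinitesimal braid Lie algebra. -/
def tRels (k : Type) [Field k] [CharZero k] (N : ℕ) :
    Set (FreeLieAlgebra k (tGenIdx N)) :=
  { x |
    (∃ (i j : Fin N) (h : i ≠ j),
        x = Tgen k i j h - Tgen k j i h.symm) ∨
    (∃ (i j l : Fin N) (h₁ : i ≠ j) (h₂ : i ≠ l) (h₃ : j ≠ l),
        x = ⁅Tgen k i j h₁, Tgen k i l h₂ + Tgen k j l h₃⁆) ∨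
    (∃ (i j l m : Fin N) (h₁ : i ≠ j) (h₂ : l ≠ m),
        i ≠ l ∧ i ≠ m ∧ j ≠ l ∧ j ≠ m ∧
        x = ⁅Tgen k i j h₁, Tgen k l m h₂⁆) }

/-- The Lie ideal generated by the infinitesimal braid relations. -/
noncomputable def tIdeal (k : Type) [Field k] [CharZero k] (N : ℕ) :
    LieIdeal k (FreeLieAlgebra k (tGenIdx N)) :=
  LieSubmodule.lieSpan k _ (tRels k N)

/-- The Lie algebra `t_N` of infinitesimal braids. -/
abbrev tAlg (k : Type) [Field k] [CharZero k] (N : ℕ) :=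
  FreeLieAlgebra k (tGenIdx N) ⧸ tIdeal k N

/-- The generator `t_{ab}` of `t_N` (junk value `0` if `a = b`). -/
noncomputable def tt (k : Type) [Field k] [CharZero k] {N : ℕ} (a b : Fin N) :
    tAlg k N :=
  if h : a ≠ b then LieSubmodule.Quotient.mk' (tIdeal k N) (Tgen k a b h) else 0


section AuxLieIdentities

variable {L : Type*} [LieRing L]

private lemma lr1 (x y : L) : ⁅x, ⁅y, x⁆⁆ + ⁅x, ⁅x, y⁆⁆ = 0 := by
  rw [← lie_skew y x, lie_neg, neg_add_cancel]

private lemma lr2 (x y : L) : ⁅x, ⁅x, y⁆⁆ + ⁅x, ⁅y, x⁆⁆ = 0 := by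
  rw [add_comm]; exact lr1 x y

private lemma lr5 (x y z : L) : ⁅y, ⁅x, z⁆⁆ - ⁅z, ⁅x, y⁆⁆ - ⁅x, ⁅y, z⁆⁆ = 0 := by
  rw [← lie_skew x z, lie_neg]
  have h := lie_jacobi x y z
  have h2 : -⁅y, ⁅z, x⁆⁆ - ⁅z, ⁅x, y⁆⁆ - ⁅x, ⁅y, z⁆⁆ =
      -(⁅x, ⁅y, z⁆⁆ + ⁅y, ⁅z, x⁆⁆ + ⁅z, ⁅x, y⁆⁆) := by abel
  rw [h2, h, neg_zero]

private lemma lr3 (x y z : L) :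
    ⁅y, ⁅x, z⁆⁆ - ⁅z, ⁅x, y⁆⁆ - (⁅x, ⁅y, z⁆⁆ - (⁅z, ⁅y, x⁆⁆ + ⁅z, ⁅x, y⁆⁆)) = 0 := by
  rw [← lie_skew y x, lie_neg, neg_add_cancel, sub_zero]
  exact lr5 x y z

private lemma lr4 (x y : L) :
    ⁅y, ⁅x, y⁆⁆ - ⁅x, ⁅y, x⁆⁆ - (⁅x, ⁅x, y⁆⁆ - ⁅y, ⁅y, x⁆⁆) = 0 := by
  rw [← lie_skew x y]
  simp only [lie_neg]
  abel

end AuxLieIdentities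

private lemma lieSpan_range_of_top (k : Type) [Field k] (X : Type) :
    LieSubalgebra.lieSpan k (FreeLieAlgebra k X) (Set.range (FreeLieAlgebra.of k)) = ⊤ := by
  rw [eq_top_iff]
  intro x _
  set S := LieSubalgebra.lieSpan k (FreeLieAlgebra k X) (Set.range (FreeLieAlgebra.of k)) with hS
  let g : FreeLieAlgebra k X →ₗ⁅k⁆ S :=
    FreeLieAlgebra.lift k (fun i => ⟨FreeLieAlgebra.of k i, LieSubalgebra.subset_lieSpan ⟨i, rfl⟩⟩)
  have h : S.incl.comp g = FreeLieAlgebra.lift k (FreeLieAlgebra.of k) := by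
    rw [← FreeLieAlgebra.lift_unique]; ext i; simp [g]
  have hid : (LieHom.id : FreeLieAlgebra k X →ₗ⁅k⁆ FreeLieAlgebra k X) =
      FreeLieAlgebra.lift k (FreeLieAlgebra.of k) := by
    rw [← FreeLieAlgebra.lift_unique]; rfl
  have hx : S.incl (g x) = x := by
    have := LieHom.congr_fun (h.trans hid.symm) x
    simpa using this
  rw [← hx]; exact (g x).2


open FreeLieAlgebra

/-- Section 1.3: the tangential derivations `D_{ab}` of the free Lie algebra `f_n`
(`D_{0i} : x_j ↦ ⁅x_i, x_j⁆`; for `i < j`, `D_{ij} : x_i ↦ ⁅x_i, x_j⁆`,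
`x_j ↦ ⁅x_j, x_i⁆`, `x_l ↦ 0` otherwise) satisfy the infinitesimal braid
relations; in particular `t_{ab} ↦ D_{ab}` defines a Lie algebra morphism
`ad : t_{n+1} → Der(f_n)` landing in the tangential derivations.  Strand indices
`{0, …, n}` are modelled by `Fin (n+1)`, the generator `x_i` (for `1 ≤ i ≤ n`)
by `of k i` with `i : Fin n`, and the strand index of `x_i` is `i.succ`. -/
theorem ad_infinitesimal_braid_relations (k : Type) [Field k] [CharZero k]
    (n : ℕ) (hn : 1 ≤ n)
    (D : Fin (n + 1) → Fin (n + 1) →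
      LieDerivation k (FreeLieAlgebra k (Fin n)) (FreeLieAlgebra k (Fin n)))
    (hsymm : ∀ a b : Fin (n + 1), D a b = D b a)
    (h0 : ∀ (i : Fin n) (j : Fin n),
      D 0 i.succ (of k j) = ⁅of k i, of k j⁆)
    (h1 : ∀ (i j : Fin n), i < j →
      D i.succ j.succ (of k i) = ⁅of k i, of k j⁆)
    (h2 : ∀ (i j : Fin n), i < j →
      D i.succ j.succ (of k j) = ⁅of k j, of k i⁆)
    (h3 : ∀ (i j l : Fin n), i < j → l ≠ i → l ≠ j →
      D i.succ j.succ (of k l) = 0) :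
    (∀ a b c : Fin (n + 1), a ≠ b → a ≠ c → b ≠ c →
      ⁅D a b, D a c + D b c⁆ = 0) ∧
    (∀ a b c d : Fin (n + 1), a ≠ b → a ≠ c → a ≠ d → b ≠ c → b ≠ d → c ≠ d →
      ⁅D a b, D c d⁆ = 0) ∧
    ∃ φ : tAlg k (n + 1) →ₗ⁅k⁆
        LieDerivation k (FreeLieAlgebra k (Fin n)) (FreeLieAlgebra k (Fin n)),
      ∀ (a b : Fin (n + 1)), a ≠ b → φ (tt k a b) = D a b := by
  classical
  -- derived values of the derivations on generators
  have hA : ∀ i j : Fin n, i ≠ j → D i.succ j.succ (of k i) = ⁅of k i, of k j⁆ := by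
    intro i j hij
    rcases hij.lt_or_gt with h | h
    · exact h1 i j h
    · rw [hsymm]; exact h2 j i h
  have hB : ∀ i j : Fin n, i ≠ j → D i.succ j.succ (of k j) = ⁅of k j, of k i⁆ := by
    intro i j hij
    rw [hsymm]; exact hA j i hij.symm
  have hZ : ∀ i j l : Fin n, i ≠ j → l ≠ i → l ≠ j → D i.succ j.succ (of k l) = 0 := by
    intro i j l hij hli hlj
    rcases hij.lt_or_gt with h | h
    · exact h3 i j l h hli hlj
    · rw [hsymm]; exact h3 j i l h hlj hli
  have hext : ∀ E : LieDerivation k (FreeLieAlgebra k (Fin n)) (FreeLieAlgebra k (Fin n)),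
      (∀ p : Fin n, E (of k p) = 0) → E = 0 := by
    intro E hE
    apply LieDerivation.ext_of_lieSpan_eq_top _ (lieSpan_range_of_top k (Fin n))
    rintro x ⟨p, rfl⟩
    simpa using hE p
  -- the five basic relations
  have C1a : ∀ i j l : Fin n, i ≠ j → i ≠ l → j ≠ l →
      ⁅D i.succ j.succ, D i.succ l.succ + D j.succ l.succ⁆ = 0 := by
    intro i j l hij hil hjl
    apply hext
    intro p
    rw [LieDerivation.commutator_apply, LieDerivation.add_apply]
    by_cases hpi : p = i
    · subst hpi
      simp [LieDerivation.add_apply, LieDerivation.apply_lie_eq_add, hA, hB, hZ, hij, hil, hjl,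
        hij.symm, hil.symm, hjl.symm]
    · by_cases hpj : p = j
      · subst hpj
        simp [LieDerivation.add_apply, LieDerivation.apply_lie_eq_add, hA, hB, hZ, hij, hil, hjl,
          hij.symm, hil.symm, hjl.symm, hpi]
      · by_cases hpl : p = l
        · subst hpl
          simp [LieDerivation.add_apply, LieDerivation.apply_lie_eq_add, hA, hB, hZ, hij, hil,
            hjl, hij.symm, hil.symm, hjl.symm, hpi, hpj]
          rw [← lie_skew (of k j) (of k i), lie_neg, add_neg_cancel]
        · simp [LieDerivation.add_apply, hZ, hij, hil, hjl, hpi, hpj, hpl]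
  have C1b : ∀ i j : Fin n, i ≠ j →
      ⁅D 0 i.succ, D 0 j.succ + D i.succ j.succ⁆ = 0 := by
    intro i j hij
    apply hext
    intro p
    rw [LieDerivation.commutator_apply, LieDerivation.add_apply]
    by_cases hpi : p = i
    · subst hpi
      simp [LieDerivation.add_apply, LieDerivation.apply_lie_eq_add, h0, hA, hB, hZ, hij,
        hij.symm]
      exact lr1 (of k p) (of k j)
    · by_cases hpj : p = j
      · subst hpj
        simp [LieDerivation.add_apply, LieDerivation.apply_lie_eq_add, h0, hA, hB, hZ, hij,
          hij.symm, hpi]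
        exact lr2 (of k p) (of k i)
      · simp [LieDerivation.add_apply, LieDerivation.apply_lie_eq_add, h0, hA, hB, hZ, hij,
          hij.symm, hpi, hpj, Ne.symm hpi, Ne.symm hpj]
        exact lr3 (of k i) (of k j) (of k p)
  have C1c : ∀ i j : Fin n, i ≠ j →
      ⁅D i.succ j.succ, D 0 i.succ + D 0 j.succ⁆ = 0 := by
    intro i j hij
    apply hext
    intro p
    rw [LieDerivation.commutator_apply, LieDerivation.add_apply]
    by_cases hpi : p = i
    · subst hpi
      simp [LieDerivation.add_apply, LieDerivation.apply_lie_eq_add, h0, hA, hB, hZ, hij,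
        hij.symm]
      exact lr4 (of k p) (of k j)
    · by_cases hpj : p = j
      · subst hpj
        simp [LieDerivation.add_apply, LieDerivation.apply_lie_eq_add, h0, hA, hB, hZ, hij,
          hij.symm, hpi]
        exact lr4 (of k p) (of k i)
      · simp [LieDerivation.add_apply, LieDerivation.apply_lie_eq_add, h0, hA, hB, hZ, hij,
          hij.symm, hpi, hpj, Ne.symm hpi, Ne.symm hpj]
  have C2a : ∀ i j l m : Fin n, i ≠ j → l ≠ m → i ≠ l → i ≠ m → j ≠ l → j ≠ m →
      ⁅D i.succ j.succ, D l.succ m.succ⁆ = 0 := by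
    intro i j l m hij hlm hil him hjl hjm
    apply hext
    intro p
    rw [LieDerivation.commutator_apply]
    by_cases hpi : p = i
    · subst hpi
      simp [LieDerivation.apply_lie_eq_add, hA, hB, hZ, hij, hlm, hil, him, hjl, hjm,
        hij.symm, hlm.symm, hil.symm, him.symm, hjl.symm, hjm.symm]
    · by_cases hpj : p = j
      · subst hpj
        simp [LieDerivation.apply_lie_eq_add, hA, hB, hZ, hij, hlm, hil, him, hjl, hjm,
          hij.symm, hlm.symm, hil.symm, him.symm, hjl.symm, hjm.symm, hpi]
      · by_cases hpl : p = l
        · subst hpl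
          simp [LieDerivation.apply_lie_eq_add, hA, hB, hZ, hij, hlm, hil, him, hjl, hjm,
            hij.symm, hlm.symm, hil.symm, him.symm, hjl.symm, hjm.symm, hpi, hpj]
        · by_cases hpm : p = m
          · subst hpm
            simp [LieDerivation.apply_lie_eq_add, hA, hB, hZ, hij, hlm, hil, him, hjl, hjm,
              hij.symm, hlm.symm, hil.symm, him.symm, hjl.symm, hjm.symm, hpi, hpj, hpl]
          · simp [hZ, hij, hlm, hpi, hpj, hpl, hpm]
  have C2b : ∀ i l m : Fin n, l ≠ m → i ≠ l → i ≠ m →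
      ⁅D 0 i.succ, D l.succ m.succ⁆ = 0 := by
    intro i l m hlm hil him
    apply hext
    intro p
    rw [LieDerivation.commutator_apply]
    by_cases hpl : p = l
    · subst hpl
      simp [LieDerivation.apply_lie_eq_add, h0, hA, hB, hZ, hlm, hil, him,
        hlm.symm, hil.symm, him.symm]
      exact lr5 (of k i) (of k p) (of k m)
    · by_cases hpm : p = m
      · subst hpm
        simp [LieDerivation.apply_lie_eq_add, h0, hA, hB, hZ, hlm, hil, him,
          hlm.symm, hil.symm, him.symm, hpl]
        exact lr5 (of k i) (of k p) (of k l)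
      · simp [LieDerivation.apply_lie_eq_add, h0, hA, hB, hZ, hlm, hil, him,
          hlm.symm, hil.symm, him.symm, hpl, hpm, Ne.symm hpl, Ne.symm hpm]
  -- succ-injectivity helper
  have hsne : ∀ {i j : Fin n}, (Fin.succ i : Fin (n + 1)) ≠ Fin.succ j → i ≠ j :=
    fun h e => h (by rw [e])
  -- assemble relation 1
  have rel1 : ∀ a b c : Fin (n + 1), a ≠ b → a ≠ c → b ≠ c →
      ⁅D a b, D a c + D b c⁆ = 0 := by
    intro a b c hab hac hbc
    induction a using Fin.cases with
    | zero =>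
      induction b using Fin.cases with
      | zero => exact absurd rfl hab
      | succ i =>
        induction c using Fin.cases with
        | zero => exact absurd rfl hac
        | succ j => exact C1b i j (hsne hbc)
    | succ i =>
      induction b using Fin.cases with
      | zero =>
        induction c using Fin.cases with
        | zero => exact absurd rfl hbc
        | succ j =>
          rw [hsymm (Fin.succ i) 0, add_comm (D (Fin.succ i) (Fin.succ j)) (D 0 (Fin.succ j))]
          exact C1b i j (hsne hac)
      | succ j =>
        have hij : i ≠ j := hsne hab
        induction c using Fin.cases with
        | zero =>
          rw [hsymm (Fin.succ i) 0, hsymm (Fin.succ j) 0]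
          exact C1c i j hij
        | succ l =>
          exact C1a i j l hij (hsne hac) (hsne hbc)
  -- assemble relation 2
  have rel2 : ∀ a b c d : Fin (n + 1), a ≠ b → a ≠ c → a ≠ d → b ≠ c → b ≠ d → c ≠ d →
      ⁅D a b, D c d⁆ = 0 := by
    intro a b c d hab hac had hbc hbd hcd
    induction c using Fin.cases with
    | zero =>
      induction a using Fin.cases with
      | zero => exact absurd rfl hac
      | succ i =>
        induction b using Fin.cases with
        | zero => exact absurd rfl hbc.symm
        | succ j =>
          induction d using Fin.cases with
          | zero => exact absurd rfl hcd
          | succ m =>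
            rw [← lie_skew, C2b m i j (hsne hab) (hsne had).symm (hsne hbd).symm, neg_zero]
    | succ l =>
      induction d using Fin.cases with
      | zero =>
        induction a using Fin.cases with
        | zero => exact absurd rfl had
        | succ i =>
          induction b using Fin.cases with
          | zero => exact absurd rfl hbd.symm
          | succ j =>
            rw [hsymm (Fin.succ l) 0, ← lie_skew,
              C2b l i j (hsne hab) (hsne hac).symm (hsne hbc).symm, neg_zero]
      | succ m =>
        induction a using Fin.cases with
        | zero =>
          induction b using Fin.cases with
          | zero => exact absurd rfl hab
          | succ j =>
            exact C2b j l m (hsne hcd) (hsne hbc) (hsne hbd)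
        | succ i =>
          induction b using Fin.cases with
          | zero =>
            rw [hsymm (Fin.succ i) 0]
            exact C2b i l m (hsne hcd) (hsne hac) (hsne had)
          | succ j =>
            exact C2a i j l m (hsne hab) (hsne hcd) (hsne hac) (hsne had) (hsne hbc) (hsne hbd)
  refine ⟨rel1, rel2, ?_⟩
  -- the morphism
  let F : FreeLieAlgebra k (tGenIdx (n + 1)) →ₗ⁅k⁆
      LieDerivation k (FreeLieAlgebra k (Fin n)) (FreeLieAlgebra k (Fin n)) :=
    FreeLieAlgebra.lift k (fun p => D p.1.1 p.1.2)
  have hFT : ∀ (a b : Fin (n + 1)) (h : a ≠ b), F (Tgen k a b h) = D a b := by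
    intro a b h
    simp [F, Tgen]
  have hker : ∀ x ∈ tRels k (n + 1), F x = 0 := by
    rintro x (⟨i, j, h, rfl⟩ | ⟨i, j, l, h₁, h₂, h₃, rfl⟩ |
      ⟨i, j, l, m, h₁, h₂, hil, him, hjl, hjm, rfl⟩)
    · rw [map_sub, hFT, hFT, hsymm i j, sub_self]
    · rw [LieHom.map_lie, map_add, hFT, hFT, hFT]
      exact rel1 i j l h₁ h₂ h₃
    · rw [LieHom.map_lie, hFT, hFT]
      exact rel2 i j l m h₁ hil him hjl hjm h₂
  have hker' : tIdeal k (n + 1) ≤ F.ker := by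
    rw [tIdeal, LieSubmodule.lieSpan_le]
    intro x hx
    rw [SetLike.mem_coe, LieHom.mem_ker]
    exact hker x hx
  let φlin : tAlg k (n + 1) →ₗ[k]
      LieDerivation k (FreeLieAlgebra k (Fin n)) (FreeLieAlgebra k (Fin n)) :=
    Submodule.liftQ (tIdeal k (n + 1)).toSubmodule F.toLinearMap
      (by intro x hx; exact LieHom.mem_ker.mp (hker' hx))
  have hφmk : ∀ x : FreeLieAlgebra k (tGenIdx (n + 1)),
      φlin (LieSubmodule.Quotient.mk (N := tIdeal k (n + 1)) x) = F x := fun x => rfl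
  have hsurj := Submodule.Quotient.mk_surjective (tIdeal k (n + 1)).toSubmodule
  refine ⟨{ toLinearMap := φlin, map_lie' := ?_ }, ?_⟩
  · intro x y
    obtain ⟨a, rfl⟩ := hsurj x
    obtain ⟨b, rfl⟩ := hsurj y
    show φlin ⁅LieSubmodule.Quotient.mk (N := tIdeal k (n + 1)) a,
      LieSubmodule.Quotient.mk (N := tIdeal k (n + 1)) b⁆ = _
    rw [← LieSubmodule.Quotient.mk_bracket, hφmk, LieHom.map_lie]
    rfl
  · intro a b hab
    show φlin (tt k a b) = D a b
    rw [tt, dif_pos hab]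
    exact (hφmk (Tgen k a b hab)).trans (hFT a b hab)
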